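/- Let L = [0,1) + (-ζ⁻¹)·[0,1) ⊂ ℂ with ζ = exp(2πi/5), and define T : L → L by T(x) = x/ζ if Im(x/ζ) ≥ 0 and T(x) = (x-1)/ζ otherwise. Then T maps L bijectively onto L. -/

import Mathlib

open Complex Real Set

noncomputable def ζ : ℂ := Complex.exp (2 * Real.pi * Complex.I / 5)
noncomputable def ω : ℂ := (1 + Real.sqrt 5) / 2

/-- The half-open lozenge L = [0,1) + (-ζ⁻¹)[0,1). -/
def L : Set ℂ :=
  {z | ∃ s t : ℝ, s ∈ Set.Ico (0:ℝ) 1 ∧ t ∈ Set.Ico (0:ℝ) 1 ∧ z = s + t * (-ζ⁻¹)}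

/-- The pentagonal piecewise rotation. -/
noncomputable def T (x : ℂ) : ℂ := if 0 ≤ (x / ζ).im then x / ζ else (x - 1) / ζ

/-- The scaled-down lozenge L' = ω⁻² L. -/
noncomputable def L' : Set ℂ := (fun z => ω⁻¹ ^ 2 * z) '' L

private noncomputable def ωr : ℝ := (1 + Real.sqrt 5) / 2

private lemma hζ_ne : ζ ≠ 0 := Complex.exp_ne_zero _

private lemma hprim : IsPrimitiveRoot ζ 5 := by
  have h := Complex.isPrimitiveRoot_exp 5 (by norm_num)
  convert h using 2
  rw [ζ]; norm_num

private lemma hζ5 : ζ ^ 5 = 1 := hprim.pow_eq_one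

private lemma hsum : 1 + ζ + ζ^2 + ζ^3 + ζ^4 = 0 := by
  have h1 : ζ ≠ 1 := hprim.ne_one (by norm_num)
  have h : (ζ - 1) * (1 + ζ + ζ^2 + ζ^3 + ζ^4) = 0 := by
    linear_combination hζ5
  rcases mul_eq_zero.1 h with h | h
  · exact absurd (sub_eq_zero.1 h) h1
  · exact h

private lemma hζ2 : ζ^2 = Complex.exp ((4*π/5 : ℝ) * I) := by
  rw [ζ, ← Complex.exp_nat_mul]
  norm_num
  ring_nf



private lemma hζ3 : ζ^3 = Complex.exp ((-(4*π/5) : ℝ) * I) := by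
  rw [ζ, ← Complex.exp_nat_mul]
  rw [show ((3:ℕ):ℂ) * (2 * (π:ℝ) * I / 5) = ((-(4*π/5) : ℝ) * I) + 2*(π:ℝ)*I by push_cast; ring]
  rw [Complex.exp_add, Complex.exp_two_pi_mul_I, mul_one]

private lemma hω_eq : (ωr : ℂ) = -(ζ^2 + ζ^3) := by
  rw [hζ2, hζ3]
  have hc : Complex.exp (((4*π/5 : ℝ):ℂ) * I) + Complex.exp (((-(4*π/5) : ℝ):ℂ) * I) = 2 * ((Real.cos (4*π/5) : ℝ) : ℂ) := by
    rw [Complex.ofReal_cos, Complex.cos]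
    push_cast
    ring_nf
  rw [hc]
  have h4 : Real.cos (4*π/5) = -((1 + Real.sqrt 5)/4) := by
    rw [show (4*π/5) = π - π/5 by ring, Real.cos_pi_sub, Real.cos_pi_div_five]
  rw [h4, ωr]
  push_cast
  ring


private lemma hωr_pos : (1:ℝ) < ωr := by
  have : (2:ℝ) ≤ Real.sqrt 5 := by
    nlinarith [Real.sq_sqrt (show (0:ℝ) ≤ 5 by norm_num), Real.sqrt_nonneg 5]
  rw [ωr]; linarith

private lemma hωr_sq : ωr^2 = ωr + 1 := by
  rw [ωr]
  nlinarith [Real.sq_sqrt (show (0:ℝ) ≤ 5 by norm_num)]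

private lemma hζω : (ωr:ℂ) * (1 + ζ^2) = ζ := by
  linear_combination (1 + ζ^2) * hω_eq - hsum - hζ5

private lemma hinv : ζ⁻¹ = ζ^4 := by
  rw [eq_comm]
  apply eq_inv_of_mul_eq_one_left
  linear_combination hζ5

private lemma hωr0 : (ωr:ℂ) ≠ 0 := by
  have := hωr_pos
  simp only [ne_eq, Complex.ofReal_eq_zero]
  linarith

private lemma h14 : (ωr:ℂ) * (ζ + ζ^4) = 1 := by
  linear_combination (ζ+ζ^4)*hω_eq - hsum - (ζ+ζ^2)*hζ5

private lemma keyA (s t : ℝ) :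
    ((s:ℂ) + (t:ℂ) * (-ζ⁻¹)) / ζ = (t:ℂ) + ((t/ωr - s : ℝ):ℂ) * (-ζ⁻¹) := by
  rw [hinv, div_eq_iff hζ_ne]
  push_cast
  field_simp [hωr0]
  have hI : (ωr:ℂ) * (ωr:ℂ)⁻¹ = 1 := mul_inv_cancel₀ hωr0
  linear_combination ((s:ℂ)*((ωr:ℂ)-1) - (t:ℂ)*(1-(ωr:ℂ)⁻¹))*hζ5 + (t:ℂ)*((ωr:ℂ)-1)*(ωr:ℂ)⁻¹*h14 - (t:ℂ)*((ωr:ℂ)-1)*(ζ+ζ^4)*hI + (t:ℂ)*hI + ((t:ℂ) - (s:ℂ)*(ωr:ℂ))*hζ5 - (t:ℂ)*h14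

private lemma hinvζ : ζ⁻¹ = Complex.exp (((-(2*π/5)):ℝ) * I) := by
  rw [ζ, ← Complex.exp_neg]
  congr 1
  push_cast
  ring

private lemma him : (-ζ⁻¹).im = Real.sin (2*π/5) := by
  rw [hinvζ, Complex.neg_im, Complex.exp_ofReal_mul_I_im, Real.sin_neg, neg_neg]

private lemma hre : (-ζ⁻¹).re = -Real.cos (2*π/5) := by
  rw [hinvζ, Complex.neg_re, Complex.exp_ofReal_mul_I_re, Real.cos_neg]

private lemma hν : 0 < Real.sin (2*π/5) := by
  apply Real.sin_pos_of_pos_of_lt_pi <;> [positivity; nlinarith [Real.pi_pos]]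

private lemma imc (a b : ℝ) : ((a:ℂ) + (b:ℂ) * (-ζ⁻¹)).im = b * Real.sin (2*π/5) := by
  simp only [Complex.add_im, Complex.mul_im, Complex.ofReal_re, Complex.ofReal_im, him]
  ring

private lemma rec' (a b : ℝ) : ((a:ℂ) + (b:ℂ) * (-ζ⁻¹)).re = a - b * Real.cos (2*π/5) := by
  simp only [Complex.add_re, Complex.mul_re, Complex.ofReal_re, Complex.ofReal_im, hre]
  ring

private lemma coords_unique {a b c d : ℝ}
    (h : (a:ℂ) + (b:ℂ) * (-ζ⁻¹) = (c:ℂ) + (d:ℂ) * (-ζ⁻¹)) : a = c ∧ b = d := by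
  have h1 := congrArg Complex.im h
  have h2 := congrArg Complex.re h
  rw [imc, imc] at h1
  rw [rec', rec'] at h2
  have hbd : b = d := by
    have := hν
    exact mul_right_cancel₀ (ne_of_gt hν) h1
  subst hbd
  constructor
  · linarith
  · rfl

private lemma keyB (s t : ℝ) :
    (((s:ℂ) + (t:ℂ) * (-ζ⁻¹)) - 1) / ζ = (t:ℂ) + ((t/ωr - s + 1 : ℝ):ℂ) * (-ζ⁻¹) := by
  rw [sub_div, keyA, one_div]
  push_cast
  ring

private lemma branch_iff (s t : ℝ) :
    0 ≤ ((((s:ℂ) + (t:ℂ) * (-ζ⁻¹))) / ζ).im ↔ ωr * s ≤ t := by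
  rw [keyA, imc]
  have hp : (0:ℝ) < ωr := by linarith [hωr_pos]
  have he : (t/ωr - s) = (t - ωr*s)/ωr := by field_simp
  rw [he, ← sub_nonneg (b := ωr * s)]
  constructor
  · intro h
    by_contra hc
    push_neg at hc
    have h1 : (t - ωr*s)/ωr < 0 := div_neg_of_neg_of_pos hc hp
    nlinarith [hν]
  · intro h
    have h1 : 0 ≤ (t - ωr*s)/ωr := div_nonneg h hp.le
    exact mul_nonneg h1 hν.le


theorem T_bijective_on_L : Set.BijOn T L L := by
  have hω1 := hωr_pos
  have hp : (0:ℝ) < ωr := by linarith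
  refine ⟨?_, ?_, ?_⟩
  · -- MapsTo
    rintro x ⟨s, t, ⟨hs0, hs1⟩, ⟨ht0, ht1⟩, rfl⟩
    have hdle : t / ωr ≤ t := div_le_self ht0 hω1.le
    rw [T]
    split_ifs with h
    · rw [keyA]
      rw [branch_iff] at h
      refine ⟨t, t/ωr - s, ⟨ht0, ht1⟩, ⟨?_, ?_⟩, rfl⟩
      · rw [sub_nonneg, le_div_iff₀ hp]; linarith
      · linarith
    · rw [keyB]
      rw [branch_iff] at h
      push_neg at h
      have : t / ωr < s := by rw [div_lt_iff₀ hp]; nlinarith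
      refine ⟨t, t/ωr - s + 1, ⟨ht0, ht1⟩, ⟨?_, ?_⟩, rfl⟩
      · have := div_nonneg ht0 hp.le; linarith
      · linarith
  · -- InjOn
    rintro x ⟨s1, t1, ⟨hs10, hs11⟩, ⟨ht10, ht11⟩, rfl⟩ y ⟨s2, t2, ⟨hs20, hs21⟩, ⟨ht20, ht21⟩, rfl⟩ h
    rw [T, T] at h
    split_ifs at h with h1 h2 h2 <;>
      [rw [keyA, keyA] at h; rw [keyA, keyB] at h; rw [keyB, keyA] at h; rw [keyB, keyB] at h] <;>
      obtain ⟨hT, hU⟩ := coords_unique h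
    · have : s1 = s2 := by
        have : t1/ωr - s1 = t2/ωr - s2 := hU
        rw [hT] at this; linarith
      rw [this, hT]
    · exfalso
      have : t1/ωr - s1 = t2/ωr - s2 + 1 := hU
      rw [hT] at this; linarith
    · exfalso
      have : t1/ωr - s1 + 1 = t2/ωr - s2 := hU
      rw [hT] at this; linarith
    · have : s1 = s2 := by
        have : t1/ωr - s1 + 1 = t2/ωr - s2 + 1 := hU
        rw [hT] at this; linarith
      rw [this, hT]
  · -- SurjOn
    rintro y ⟨s', t', ⟨hs0, hs1⟩, ⟨ht0, ht1⟩, rfl⟩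
    have hd0 : 0 ≤ s'/ωr := div_nonneg hs0 hp.le
    have hd1 : s'/ωr ≤ s' := div_le_self hs0 hω1.le
    have hmdc : ωr * (s'/ωr) = s' := by field_simp
    by_cases hc : 0 ≤ s'/ωr - t'
    · refine ⟨(↑(s'/ωr - t') + (↑s' : ℂ) * (-ζ⁻¹)), ⟨s'/ωr - t', s', ⟨hc, by linarith⟩, ⟨hs0, hs1⟩, rfl⟩, ?_⟩
      rw [T, if_pos, keyA]
      · congr 2
        push_cast; ring
      · rw [branch_iff]
        nlinarith [hmdc]
    · push_neg at hc
      refine ⟨(↑(s'/ωr - t' + 1) + (↑s' : ℂ) * (-ζ⁻¹)), ⟨s'/ωr - t' + 1, s', ⟨by linarith, by linarith⟩, ⟨hs0, hs1⟩, rfl⟩, ?_⟩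
      rw [T, if_neg, keyB]
      · congr 2
        push_cast; ring
      · rw [branch_iff]
        push_neg
        nlinarith [hmdc]
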